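/- Let 1 ≤ k ≤ d ≤ d' be integers with k dividing d·d'. Then there exists an SV1Bk in M_{d×d'}, i.e., a family {A_i}_{i=1}^{d·d'} of k-singular-value-1 matrices in M_{d×d'} satisfying Tr(A_iᴴ A_j) = k·δ_{ij} for all i, j. -/

import Mathlib

open Matrix Complex

namespace SV1


/-- column of the p-th cell in the diagonal enumeration -/
def pcol (d d' p : ℕ) : ℕ := (p % d + p / d) % d'

/-- inverse: position of cell (a,b) -/
def posOf (d d' a b : ℕ) : ℕ := ((b + d' - a) % d') * d + a

lemma posOf_lt {d d' a b : ℕ} (ha : a < d) (hb : b < d') :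
    posOf d d' a b < d * d' := by
  have h1 : (b + d' - a) % d' < d' := Nat.mod_lt _ (by omega)
  have : ((b + d' - a) % d') * d + a < ((b + d' - a) % d' + 1) * d := by
    rw [add_mul]; omega
  calc posOf d d' a b < ((b + d' - a) % d' + 1) * d := this
    _ ≤ d' * d := Nat.mul_le_mul_right d (by omega)
    _ = d * d' := Nat.mul_comm _ _

lemma posOf_mod {d d' a b : ℕ} (ha : a < d) : posOf d d' a b % d = a := by
  unfold posOf
  rw [Nat.add_comm, Nat.add_mul_mod_self_right, Nat.mod_eq_of_lt ha]

lemma posOf_div {d d' a b : ℕ} (ha : a < d) :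
    posOf d d' a b / d = (b + d' - a) % d' := by
  unfold posOf
  rw [Nat.add_comm, Nat.add_mul_div_right _ _ (by omega : 0 < d),
    Nat.div_eq_of_lt ha, Nat.zero_add]

lemma pcol_posOf {d d' a b : ℕ} (hdd : d ≤ d') (ha : a < d) (hb : b < d') :
    pcol d d' (posOf d d' a b) = b := by
  unfold pcol
  rw [posOf_mod ha, posOf_div ha]
  have ha' : a < d' := lt_of_lt_of_le ha hdd
  have h0 : b + d' - a = (b + d' - a) % d' + d' * ((b + d' - a) / d') :=
    (Nat.mod_add_div _ _).symm
  have h2 : (b + d' - a) / d' < 2 :=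
    Nat.div_lt_of_lt_mul (by omega)
  interval_cases h : (b + d' - a) / d' <;>
    [ (have : (b + d' - a) % d' = b + d' - a := by omega);
      (have : (b + d' - a) % d' = b - a := by omega)]
  · rw [this]
    have : a + (b + d' - a) = b + d' := by omega
    rw [this, Nat.add_mod_right, Nat.mod_eq_of_lt hb]
  · rw [this]
    have hab : a ≤ b := by omega
    have : a + (b - a) = b := by omega
    rw [this, Nat.mod_eq_of_lt hb]

lemma posOf_mod_pcol {d d' p : ℕ} (hd : 0 < d) (hdd : d ≤ d') (hp : p < d * d') :
    posOf d d' (p % d) (pcol d d' p) = p := by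
  set a := p % d with hadef
  set c := p / d with hcdef
  have ha : a < d := Nat.mod_lt _ hd
  have ha' : a < d' := lt_of_lt_of_le ha hdd
  have hc : c < d' := Nat.div_lt_of_lt_mul hp
  have hp' : p = d * c + a := (Nat.div_add_mod p d).symm
  unfold posOf pcol
  have h0 : a + c = (a + c) % d' + d' * ((a + c) / d') := (Nat.mod_add_div _ _).symm
  have h2 : (a + c) / d' < 2 := Nat.div_lt_of_lt_mul (by omega)
  have key : ((a + c) % d' + d' - a) % d' = c := by
    interval_cases h : (a + c) / d'
    · have hx : (a + c) % d' = a + c := by omega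
      have : (a + c) % d' + d' - a = c + d' := by omega
      rw [this, Nat.add_mod_right, Nat.mod_eq_of_lt hc]
    · have hx : (a + c) % d' = a + c - d' := by omega
      have : (a + c) % d' + d' - a = c := by omega
      rw [this, Nat.mod_eq_of_lt hc]
  rw [key, Nat.mul_comm]
  omega

/-- rows are distinct within a block of length k ≤ d -/
lemma block_row_inj {k d q p₁ p₂ : ℕ} (hkd : k ≤ d)
    (h₁ : q * k ≤ p₁) (h₁' : p₁ < q * k + k) (h₂ : q * k ≤ p₂) (h₂' : p₂ < q * k + k)
    (h : p₁ % d = p₂ % d) : p₁ = p₂ := by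
  rcases le_total p₁ p₂ with hle | hle
  · have hd0 : (p₂ - p₁) % d = 0 := Nat.sub_mod_eq_zero_of_mod_eq h.symm
    have : p₂ - p₁ < d := by omega
    rw [Nat.mod_eq_of_lt this] at hd0
    omega
  · have hd0 : (p₁ - p₂) % d = 0 := Nat.sub_mod_eq_zero_of_mod_eq h
    have : p₁ - p₂ < d := by omega
    rw [Nat.mod_eq_of_lt this] at hd0
    omega

/-- columns are distinct within a block of length k ≤ d ≤ d' -/
lemma block_col_inj {k d d' q p₁ p₂ : ℕ} (hk : 1 ≤ k) (hkd : k ≤ d) (hdd : d ≤ d')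
    (h₁ : q * k ≤ p₁) (h₁' : p₁ < q * k + k) (h₂ : q * k ≤ p₂) (h₂' : p₂ < q * k + k)
    (h : pcol d d' p₁ = pcol d d' p₂) : p₁ = p₂ := by
  have main : ∀ p₁ p₂ : ℕ, p₁ ≤ p₂ → q * k ≤ p₁ → p₁ < q * k + k → q * k ≤ p₂ →
      p₂ < q * k + k → pcol d d' p₁ = pcol d d' p₂ → p₁ = p₂ := by
    intro p₁ p₂ hle h₁ h₁' h₂ h₂' h
    set a₁ := p₁ % d with ha₁def
    set a₂ := p₂ % d with ha₂def
    set c₁ := p₁ / d with hc₁def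
    set c₂ := p₂ / d with hc₂def
    have hd0 : 0 < d := by omega
    have hp₁ : p₁ = d * c₁ + a₁ := (Nat.div_add_mod p₁ d).symm
    have hp₂ : p₂ = d * c₂ + a₂ := (Nat.div_add_mod p₂ d).symm
    have ha₁ : a₁ < d := Nat.mod_lt _ hd0
    have ha₂ : a₂ < d := Nat.mod_lt _ hd0
    have hcle : c₁ ≤ c₂ := Nat.div_le_div_right hle
    have hc2 : c₂ < c₁ + 2 := by
      by_contra hcon
      push_neg at hcon
      have : d * (c₁ + 2) ≤ d * c₂ := Nat.mul_le_mul_left d hcon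
      have hm : d * (c₁ + 2) = d * c₁ + 2 * d := by ring
      omega
    unfold pcol at h
    rw [← ha₁def, ← ha₂def, ← hc₁def, ← hc₂def] at h
    clear_value a₁ a₂ c₁ c₂
    clear ha₁def ha₂def hc₁def hc₂def
    rcases (show c₂ = c₁ ∨ c₂ = c₁ + 1 by omega) with hcc | hcc <;> rw [hcc] at h hp₂
    · -- same diagonal
      have hdiff : a₂ - a₁ = p₂ - p₁ := by omega
      have hd0' : (a₂ + c₁ - (a₁ + c₁)) % d' = 0 :=
        Nat.sub_mod_eq_zero_of_mod_eq h.symm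
      have he : a₂ + c₁ - (a₁ + c₁) = a₂ - a₁ := by omega
      rw [he, Nat.mod_eq_of_lt (by omega : a₂ - a₁ < d')] at hd0'
      omega
    · -- c₂ = c₁ + 1
      have hmul1 : d * (c₁ + 1) = d * c₁ + d := by ring
      have h21 : a₂ < a₁ := by omega
      have hd0' : (a₁ + c₁ - (a₂ + (c₁ + 1))) % d' = 0 :=
        Nat.sub_mod_eq_zero_of_mod_eq h
      have he : a₁ + c₁ - (a₂ + (c₁ + 1)) = a₁ - a₂ - 1 := by omega
      rw [he, Nat.mod_eq_of_lt (by omega : a₁ - a₂ - 1 < d')] at hd0'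
      -- so a₁ = a₂ + 1, p₂ - p₁ = d - 1, forcing k = d
      have hkd' : k = d := by omega
      have hqk : q * k = d * q := by rw [hkd']; ring
      have h5 : d * c₁ < d * q := by omega
      have h6 : c₁ < q := Nat.lt_of_mul_lt_mul_left h5
      have h7 : d * (c₁ + 1) ≤ d * q := Nat.mul_le_mul_left d h6
      omega
  rcases le_total p₁ p₂ with hle | hle
  · exact main p₁ p₂ hle h₁ h₁' h₂ h₂' h
  · exact (main p₂ p₁ hle h₂ h₂' h₁ h₁' h.symm).symm




noncomputable def φ (k t s : ℕ) : ℂ :=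
  Complex.exp (2 * Real.pi * Complex.I * t * s / k)

lemma phi_conj_mul (k t t' s : ℕ) :
    star (φ k t s) * φ k t' s =
      Complex.exp (2 * Real.pi * Complex.I * ((t' : ℂ) - t) / k) ^ s := by
  unfold φ
  rw [show (star (Complex.exp (2 * Real.pi * Complex.I * t * s / k)) : ℂ)
      = Complex.exp (starRingEnd ℂ (2 * Real.pi * Complex.I * t * s / k)) from
      (Complex.exp_conj _).symm,
    ← Complex.exp_add, ← Complex.exp_nat_mul]
  congr 1
  have hconj : (starRingEnd ℂ) (2 * Real.pi * Complex.I * t * s / k)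
      = -(2 * Real.pi * Complex.I * t * s / k) := by
    simp [map_div₀, _root_.map_mul, Complex.conj_I, Complex.conj_ofReal, map_ofNat, map_natCast]
    ring
  rw [hconj]
  ring

lemma phi_conj_mul_self (k t s : ℕ) : star (φ k t s) * φ k t s = 1 := by
  rw [phi_conj_mul]
  simp

lemma phi_sum {k : ℕ} (hk : 0 < k) (t t' : ℕ) (ht : t < k) (ht' : t' < k) :
    ∑ s ∈ Finset.range k, star (φ k t s) * φ k t' s
      = if t = t' then (k : ℂ) else 0 := by
  have hk' : (k : ℂ) ≠ 0 := Nat.cast_ne_zero.mpr (by omega)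
  by_cases h : t = t'
  · subst h
    rw [if_pos rfl, Finset.sum_congr rfl (fun s _ => phi_conj_mul_self k t s)]
    simp
  · rw [if_neg h, Finset.sum_congr rfl (fun s _ => phi_conj_mul k t t' s)]
    set ζ : ℂ := Complex.exp (2 * Real.pi * Complex.I * ((t' : ℂ) - t) / k) with hζ
    have hζk : ζ ^ k = 1 := by
      rw [hζ, ← Complex.exp_nat_mul]
      have heq : (k : ℂ) * (2 * Real.pi * Complex.I * ((t' : ℂ) - t) / k)
          = ((t' - (t : ℤ) : ℤ) : ℂ) * (2 * Real.pi * Complex.I) := by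
        push_cast
        field_simp
      rw [heq, Complex.exp_int_mul_two_pi_mul_I]
    have hζ1 : ζ ≠ 1 := by
      intro hcon
      rw [hζ, Complex.exp_eq_one_iff] at hcon
      obtain ⟨n, hn⟩ := hcon
      have h2πI : (2 * (Real.pi : ℂ) * Complex.I) ≠ 0 := by
        simp [Real.pi_ne_zero, Complex.I_ne_zero]
      have key : ((t' : ℂ) - t) = n * k := by
        have h2 : (2 * (Real.pi : ℂ) * Complex.I) * ((t' : ℂ) - t)
            = (2 * (Real.pi : ℂ) * Complex.I) * (n * k) := by
          field_simp at hn
          linear_combination (2 * (Real.pi : ℂ) * Complex.I) * hn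
        exact mul_left_cancel₀ h2πI h2
      have key' : (t' : ℤ) - t = n * k := by exact_mod_cast key
      have hkz : (0 : ℤ) < k := by exact_mod_cast hk
      rcases lt_trichotomy n 0 with hn0 | hn0 | hn0
      · have hb : n * (k : ℤ) ≤ -k := by nlinarith
        omega
      · rw [hn0, zero_mul] at key'
        have : t = t' := by omega
        exact h this
      · have hb : (k : ℤ) ≤ n * k := by nlinarith
        omega
    rw [geom_sum_eq hζ1, hζk]
    simp





lemma div_eq_iff_block {k q p : ℕ} (hk : 0 < k) :
    p / k = q ↔ q * k ≤ p ∧ p < q * k + k := by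
  constructor
  · intro h
    have h1 := Nat.div_add_mod p k
    have h2 : p % k < k := Nat.mod_lt _ hk
    rw [h] at h1
    have hcomm : k * q = q * k := Nat.mul_comm _ _
    omega
  · rintro ⟨h1, h2⟩
    have hle : q ≤ p / k := (Nat.le_div_iff_mul_le hk).2 h1
    have hlt : p / k < q + 1 := (Nat.div_lt_iff_lt_mul hk).2 (by rw [add_mul]; omega)
    omega

/-- the cell enumeration equivalence -/
def cellEquiv (d d' : ℕ) (hd : 0 < d) (hdd : d ≤ d') : Fin (d * d') ≃ Fin d × Fin d' where
  toFun p := (⟨(p : ℕ) % d, Nat.mod_lt _ hd⟩,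
    ⟨pcol d d' p, Nat.mod_lt _ (by omega)⟩)
  invFun x := ⟨posOf d d' x.1 x.2, posOf_lt x.1.2 x.2.2⟩
  left_inv p := Fin.ext (posOf_mod_pcol hd hdd p.2)
  right_inv x := Prod.ext (Fin.ext (posOf_mod x.1.2)) (Fin.ext (pcol_posOf hdd x.1.2 x.2.2))

/-- The basis matrices -/
noncomputable def Amat (k d d' i : ℕ) : Matrix (Fin d) (Fin d') ℂ :=
  Matrix.of fun a b =>
    if posOf d d' (a : ℕ) (b : ℕ) / k = i / k then φ k (i % k) (posOf d d' (a : ℕ) (b : ℕ) % k)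
    else 0

lemma sum_block {k N Q : ℕ} (hk : 0 < k) (hQ : Q * k + k ≤ N) (f : ℕ → ℂ) :
    ∑ p ∈ Finset.range N, (if p / k = Q then f p else 0)
      = ∑ s ∈ Finset.range k, f (Q * k + s) := by
  classical
  rw [Finset.sum_ite, Finset.sum_const_zero, add_zero]
  have hset : (Finset.range N).filter (fun p => p / k = Q)
      = (Finset.range k).image (fun s => Q * k + s) := by
    ext p
    simp only [Finset.mem_filter, Finset.mem_range, Finset.mem_image]
    constructor
    · rintro ⟨hpN, hpQ⟩
      have h := (div_eq_iff_block hk).1 hpQ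
      exact ⟨p - Q * k, by omega, by omega⟩
    · rintro ⟨s, hs, rfl⟩
      exact ⟨by omega, (div_eq_iff_block hk).2 ⟨by omega, by omega⟩⟩
  rw [hset, Finset.sum_image (by intro a _ b _ h; have h' : Q * k + a = Q * k + b := h; omega)]

lemma mod_block {k Q s : ℕ} (hs : s < k) : (Q * k + s) % k = s := by
  rw [Nat.add_comm, Nat.add_mul_mod_self_right, Nat.mod_eq_of_lt hs]

lemma trace_Amat {k d d' : ℕ} (hk : 1 ≤ k) (hkd : k ≤ d) (hdd : d ≤ d') (hdvd : k ∣ d * d')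
    {i j : ℕ} (hi : i < d * d') (hj : j < d * d') :
    ((Amat k d d' i)ᴴ * Amat k d d' j).trace = if i = j then (k : ℂ) else 0 := by
  classical
  have hd : 0 < d := by omega
  have hk0 : 0 < k := hk
  set cE := cellEquiv d d' hd hdd with hcE
  have h1 : ((Amat k d d' i)ᴴ * Amat k d d' j).trace
      = ∑ x : Fin d × Fin d', star (Amat k d d' i x.1 x.2) * Amat k d d' j x.1 x.2 := by
    rw [Matrix.trace]
    simp only [Matrix.diag, Matrix.mul_apply, Matrix.conjTranspose_apply]
    rw [Fintype.sum_prod_type_right]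
  rw [h1, ← Equiv.sum_comp cE
    (fun x : Fin d × Fin d' => star (Amat k d d' i x.1 x.2) * Amat k d d' j x.1 x.2)]
  have h2 : ∀ p : Fin (d * d'),
      star (Amat k d d' i (cE p).1 (cE p).2) * Amat k d d' j (cE p).1 (cE p).2
        = (if (p : ℕ) / k = i / k then star (φ k (i % k) ((p : ℕ) % k)) else 0)
          * (if (p : ℕ) / k = j / k then φ k (j % k) ((p : ℕ) % k) else 0) := by
    intro p
    have hpos : posOf d d' (((cE p).1 : ℕ)) (((cE p).2 : ℕ)) = (p : ℕ) := by
      rw [hcE]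
      exact posOf_mod_pcol hd hdd p.2
    simp only [Amat, Matrix.of_apply, hpos]
    split_ifs <;> simp
  rw [Finset.sum_congr rfl (fun p _ => h2 p)]
  by_cases hij : i / k = j / k
  · -- same block
    have h3 : ∀ p : Fin (d * d'),
        (if (p : ℕ) / k = i / k then star (φ k (i % k) ((p : ℕ) % k)) else 0)
          * (if (p : ℕ) / k = j / k then φ k (j % k) ((p : ℕ) % k) else 0)
        = (if (p : ℕ) / k = i / k
            then star (φ k (i % k) ((p : ℕ) % k)) * φ k (j % k) ((p : ℕ) % k) else 0) := by
      intro p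
      rw [← hij]
      split_ifs <;> simp
    rw [Finset.sum_congr rfl (fun p _ => h3 p)]
    have h4 : ∑ p : Fin (d * d'), (if (p : ℕ) / k = i / k
            then star (φ k (i % k) ((p : ℕ) % k)) * φ k (j % k) ((p : ℕ) % k) else 0)
        = ∑ p ∈ Finset.range (d * d'), (if p / k = i / k
            then star (φ k (i % k) (p % k)) * φ k (j % k) (p % k) else 0) :=
      Fin.sum_univ_eq_sum_range (fun p : ℕ => if p / k = i / k
        then star (φ k (i % k) (p % k)) * φ k (j % k) (p % k) else 0) (d * d')
    have hQk : i / k * k + k ≤ d * d' := by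
      obtain ⟨m, hm⟩ := hdvd
      have him : i / k < m := Nat.div_lt_of_lt_mul (by omega)
      have : (i / k + 1) * k ≤ m * k := Nat.mul_le_mul_right k (by omega)
      have hmk : m * k = k * m := Nat.mul_comm _ _
      rw [add_mul] at this
      omega
    rw [h4, sum_block hk0 hQk]
    have h7 : ∑ s ∈ Finset.range k,
        star (φ k (i % k) ((i / k * k + s) % k)) * φ k (j % k) ((i / k * k + s) % k)
        = ∑ s ∈ Finset.range k, star (φ k (i % k) s) * φ k (j % k) s :=
      Finset.sum_congr rfl (fun s hs => by rw [mod_block (Finset.mem_range.1 hs)])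
    rw [h7, phi_sum hk0 _ _ (Nat.mod_lt _ hk0) (Nat.mod_lt _ hk0)]
    have hiff : i % k = j % k ↔ i = j := by
      constructor
      · intro hmod
        have e1 := Nat.div_add_mod i k
        have e2 := Nat.div_add_mod j k
        rw [hij] at e1
        omega
      · intro h; rw [h]
    by_cases hmod : i % k = j % k
    · rw [if_pos hmod, if_pos (hiff.1 hmod)]
    · rw [if_neg hmod, if_neg (fun h => hmod (hiff.2 h))]
  · -- different blocks: everything is zero, and i ≠ j
    have hne : i ≠ j := fun h => hij (by rw [h])
    rw [if_neg hne]
    apply Finset.sum_eq_zero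
    intro p _
    by_cases h1' : (p : ℕ) / k = i / k
    · rw [if_neg (fun h : (p : ℕ) / k = j / k => hij (h1'.symm.trans h))]
      simp
    · rw [if_neg h1']
      simp

lemma AhA {k d d' : ℕ} (hk : 1 ≤ k) (hkd : k ≤ d) (hdd : d ≤ d') {i : ℕ} :
    (Amat k d d' i)ᴴ * Amat k d d' i
      = Matrix.diagonal (fun b : Fin d' =>
          if ∃ a : Fin d, posOf d d' (a : ℕ) (b : ℕ) / k = i / k then (1 : ℂ) else 0) := by
  classical
  have hk0 : 0 < k := hk
  ext b b'
  rw [Matrix.mul_apply]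
  by_cases hbb : b = b'
  · subst hbb
    rw [Matrix.diagonal_apply_eq]
    simp only [Matrix.conjTranspose_apply, Amat, Matrix.of_apply]
    have hterm : ∀ a : Fin d,
        star (if posOf d d' (a : ℕ) (b : ℕ) / k = i / k
            then φ k (i % k) (posOf d d' (a : ℕ) (b : ℕ) % k) else 0)
          * (if posOf d d' (a : ℕ) (b : ℕ) / k = i / k
            then φ k (i % k) (posOf d d' (a : ℕ) (b : ℕ) % k) else 0)
        = if posOf d d' (a : ℕ) (b : ℕ) / k = i / k then (1 : ℂ) else 0 := by
      intro a
      split_ifs with h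
      · exact phi_conj_mul_self _ _ _
      · simp
    rw [Finset.sum_congr rfl (fun a _ => hterm a)]
    by_cases hex : ∃ a : Fin d, posOf d d' (a : ℕ) (b : ℕ) / k = i / k
    · rw [if_pos hex]
      obtain ⟨a₀, ha₀⟩ := hex
      rw [Finset.sum_eq_single a₀]
      · rw [if_pos ha₀]
      · intro a _ hne
        rw [if_neg]
        intro hc
        apply hne
        have hB₀ := (div_eq_iff_block hk0).1 ha₀
        have hB := (div_eq_iff_block hk0).1 hc
        have hcol : pcol d d' (posOf d d' (a : ℕ) (b : ℕ))
            = pcol d d' (posOf d d' (a₀ : ℕ) (b : ℕ)) := by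
          rw [pcol_posOf hdd a.2 b.2, pcol_posOf hdd a₀.2 b.2]
        have hpe := block_col_inj hk hkd hdd hB.1 hB.2 hB₀.1 hB₀.2 hcol
        have : (a : ℕ) = (a₀ : ℕ) := by
          rw [← posOf_mod (b := (b : ℕ)) a.2, ← posOf_mod (b := (b : ℕ)) a₀.2, hpe]
        exact Fin.ext this
      · intro h
        exact absurd (Finset.mem_univ a₀) h
    · rw [if_neg hex]
      apply Finset.sum_eq_zero
      intro a _
      rw [if_neg (fun hc => hex ⟨a, hc⟩)]
  · rw [Matrix.diagonal_apply_ne _ hbb]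
    apply Finset.sum_eq_zero
    intro a _
    simp only [Matrix.conjTranspose_apply, Amat, Matrix.of_apply]
    by_cases h1 : posOf d d' (a : ℕ) (b : ℕ) / k = i / k
    · by_cases h2 : posOf d d' (a : ℕ) (b' : ℕ) / k = i / k
      · exfalso
        have hB1 := (div_eq_iff_block hk0).1 h1
        have hB2 := (div_eq_iff_block hk0).1 h2
        have hrow : posOf d d' (a : ℕ) (b : ℕ) % d = posOf d d' (a : ℕ) (b' : ℕ) % d := by
          rw [posOf_mod a.2, posOf_mod a.2]
        have hpe := block_row_inj hkd hB1.1 hB1.2 hB2.1 hB2.2 hrow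
        apply hbb
        have : (b : ℕ) = (b' : ℕ) := by
          rw [← pcol_posOf hdd a.2 b.2, ← pcol_posOf hdd a.2 b'.2, hpe]
        exact Fin.ext this
      · rw [if_neg h2, mul_zero]
    · rw [if_neg h1, star_zero, zero_mul]

lemma rank_Amat {k d d' : ℕ} (hk : 1 ≤ k) (hkd : k ≤ d) (hdd : d ≤ d') (hdvd : k ∣ d * d')
    {i : ℕ} (hi : i < d * d') : (Amat k d d' i).rank = k := by
  classical
  open ComplexOrder in
  have hrk := Matrix.rank_conjTranspose_mul_self (Amat k d d' i)
  have hk0 : 0 < k := hk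
  have hd : 0 < d := by omega
  rw [← hrk, AhA hk hkd hdd, Matrix.rank_diagonal]
  have hQk : i / k * k + k ≤ d * d' := by
    obtain ⟨m, hm⟩ := hdvd
    have him : i / k < m := Nat.div_lt_of_lt_mul (by omega)
    have h5 : (i / k + 1) * k ≤ m * k := Nat.mul_le_mul_right k (by omega)
    have hmk : m * k = k * m := Nat.mul_comm _ _
    rw [add_mul] at h5
    omega
  set Q := i / k with hQ
  -- the bijection from Fin k to the support
  have hwd : ∀ s : ℕ, s < k → ∃ a : Fin d,
      posOf d d' (a : ℕ) (pcol d d' (Q * k + s)) / k = Q := by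
    intro s hs
    have hlt : Q * k + s < d * d' := by omega
    refine ⟨⟨(Q * k + s) % d, Nat.mod_lt _ hd⟩, ?_⟩
    show posOf d d' ((Q * k + s) % d) (pcol d d' (Q * k + s)) / k = Q
    rw [posOf_mod_pcol hd hdd hlt]
    exact (div_eq_iff_block hk0).2 ⟨by omega, by omega⟩
  let f : Fin k → {b : Fin d' //
      (if ∃ a : Fin d, posOf d d' (a : ℕ) (b : ℕ) / k = Q then (1 : ℂ) else 0) ≠ 0} :=
    fun s => ⟨⟨pcol d d' (Q * k + (s : ℕ)), Nat.mod_lt _ (by omega)⟩, by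
      rw [if_pos (hwd s s.2)]
      exact one_ne_zero⟩
  have hbij : Function.Bijective f := by
    constructor
    · intro s s' hss
      have : pcol d d' (Q * k + (s : ℕ)) = pcol d d' (Q * k + (s' : ℕ)) := by
        have := congrArg (fun x => ((x : {b : Fin d' // _}).1 : ℕ)) hss
        exact this
      have := block_col_inj hk hkd hdd (q := Q)
        (by omega) (by omega) (by omega) (by omega) this
      exact Fin.ext (by omega)
    · rintro ⟨b, hb⟩
      have hex : ∃ a : Fin d, posOf d d' (a : ℕ) (b : ℕ) / k = Q := by
        by_contra hc
        rw [if_neg hc] at hb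
        exact hb rfl
      obtain ⟨a, ha⟩ := hex
      have hB := (div_eq_iff_block hk0).1 ha
      set p := posOf d d' (a : ℕ) (b : ℕ) with hp
      refine ⟨⟨p - Q * k, by omega⟩, ?_⟩
      apply Subtype.ext
      apply Fin.ext
      show pcol d d' (Q * k + (p - Q * k)) = (b : ℕ)
      have : Q * k + (p - Q * k) = p := by omega
      rw [this, hp, pcol_posOf hdd a.2 b.2]
  calc Fintype.card {b : Fin d' //
      (if ∃ a : Fin d, posOf d d' (a : ℕ) (b : ℕ) / k = Q then (1 : ℂ) else 0) ≠ 0}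
      = Fintype.card (Fin k) := (Fintype.card_of_bijective hbij).symm
    _ = k := Fintype.card_fin k


end SV1

open Matrix

/-- `A` is a `k`-singular-value-1 matrix: its nonzero singular values are exactly
`k` copies of `1`; equivalently `(Aᴴ A)² = Aᴴ A` and `rank A = k`. -/
def IsSV1 {m n : Type*} [Fintype m] [Fintype n] (k : ℕ) (A : Matrix m n ℂ) : Prop :=
  (Aᴴ * A) * (Aᴴ * A) = Aᴴ * A ∧ A.rank = k

/-- if `1 ≤ k ≤ d ≤ d'` and `k ∣ d·d'`, then there is an SV1Bk in
`M_{d×d'}`: a family of `d·d'` `k`-singular-value-1 matrices with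
`Tr(A_iᴴ A_j) = k·δ_{ij}`. -/
theorem exists_SV1Bk (k d d' : ℕ) (hk : 1 ≤ k) (hkd : k ≤ d) (hdd : d ≤ d')
    (hdvd : k ∣ d * d') :
    ∃ A : Fin (d * d') → Matrix (Fin d) (Fin d') ℂ,
      (∀ i, IsSV1 k (A i)) ∧
      (∀ i j, ((A i)ᴴ * A j).trace = if i = j then (k : ℂ) else 0) := by
  classical
  refine ⟨fun i => SV1.Amat k d d' i, fun i => ⟨?_, ?_⟩, fun i j => ?_⟩
  · rw [SV1.AhA hk hkd hdd, Matrix.diagonal_mul_diagonal]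
    ext b b'
    by_cases hbb : b = b'
    · subst hbb
      rw [Matrix.diagonal_apply_eq, Matrix.diagonal_apply_eq]
      by_cases h : ∃ a : Fin d, SV1.posOf d d' (a : ℕ) (b : ℕ) / k = (i : ℕ) / k
      · simp [h]
      · simp [h]
    · rw [Matrix.diagonal_apply_ne _ hbb, Matrix.diagonal_apply_ne _ hbb]
  · exact SV1.rank_Amat hk hkd hdd hdvd i.2
  · rw [SV1.trace_Amat hk hkd hdd hdvd i.2 j.2]
    by_cases h : i = j
    · simp [h]
    · rw [if_neg (fun hn : (i : ℕ) = (j : ℕ) => h (Fin.ext hn)), if_neg h]
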